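/- Let w : ℕ × ℕ → [0,∞) satisfy: (a) for each u ∈ ℕ the sequence (w(u,k))_{k∈ℕ} tends to 0, and (b) C := sup_{u∈ℕ} Σ_{k=1}^∞ w(k,u) < ∞. Then T(x_n) := (Σ_{n=1}^∞ x_n · w(n,u))_{u∈ℕ} defines a positive, order continuous bounded linear operator on ℓ∞ which maps c₀ into c₀, and both T and its restriction to c₀ have operator norm equal to C. -/

import Mathlib

open Filter BoundedContinuousFunction ZeroAtInftyContinuousMap
open scoped ZeroAtInfty

/-- A bounded linear operator `S` on `ℓ∞` (modelled as `ℕ →ᵇ ℝ`) is order continuous if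
for every decreasing net in `ℓ∞` with infimum `0` the image net has infimum `0`. -/
def IsOrderContinuousOp (S : (ℕ →ᵇ ℝ) →L[ℝ] (ℕ →ᵇ ℝ)) : Prop :=
  ∀ (ι : Type) (p : Preorder ι), Nonempty ι →
    (∀ i j : ι, ∃ k : ι, p.le i k ∧ p.le j k) →
    ∀ x : ι → (ℕ →ᵇ ℝ), (∀ i j : ι, p.le i j → x j ≤ x i) →
      IsGLB (Set.range x) 0 → IsGLB (Set.range fun i => S (x i)) 0

set_option maxHeartbeats 1000000 in
/-- Let `w : ℕ × ℕ → [0,∞)` satisfy (a) `w(u, k) → 0` as `k → ∞` for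
each `u` and (b) `C := sup_u ∑_k w(k, u) < ∞`. Then `(T x)_u := ∑_n x_n · w(n, u)`
defines a positive, order continuous bounded linear operator on `ℓ∞ = ℕ →ᵇ ℝ` which maps
`c₀` (the null sequences) into `c₀`, and both `T` and its restriction to
`c₀ = C₀(ℕ, ℝ)` have operator norm `C`. -/
theorem c0_graph_defines_operator
    (w : ℕ × ℕ → ℝ) (hw : ∀ q : ℕ × ℕ, 0 ≤ w q)
    (ha : ∀ u : ℕ, Tendsto (fun k : ℕ => w (u, k)) atTop (nhds 0))
    (hsum : ∀ u : ℕ, Summable fun k : ℕ => w (k, u))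
    (hbdd : BddAbove (Set.range fun u : ℕ => ∑' k : ℕ, w (k, u)))
    (C : ℝ) (hC : C = ⨆ u : ℕ, ∑' k : ℕ, w (k, u)) :
    ∃ T : (ℕ →ᵇ ℝ) →L[ℝ] (ℕ →ᵇ ℝ),
      (∀ (x : ℕ →ᵇ ℝ) (u : ℕ), T x u = ∑' n : ℕ, x n * w (n, u)) ∧
      (∀ x : ℕ →ᵇ ℝ, 0 ≤ x → 0 ≤ T x) ∧
      IsOrderContinuousOp T ∧
      (∀ x : ℕ →ᵇ ℝ, Tendsto (fun n : ℕ => x n) atTop (nhds 0) →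
        Tendsto (fun n : ℕ => T x n) atTop (nhds 0)) ∧
      ‖T‖ = C ∧
      (∀ T₀ : C₀(ℕ, ℝ) →L[ℝ] C₀(ℕ, ℝ),
        (∀ x : C₀(ℕ, ℝ), (T₀ x).toBCF = T x.toBCF) → ‖T₀‖ = C) := by
  have hCle : ∀ u : ℕ, (∑' k : ℕ, w (k, u)) ≤ C := fun u => hC ▸ le_ciSup hbdd u
  have hC0 : 0 ≤ C := le_trans (tsum_nonneg fun k => hw _) (hCle 0)
  have hsx : ∀ (x : ℕ →ᵇ ℝ) (u : ℕ), Summable fun n => x n * w (n, u) := by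
    intro x u
    refine Summable.of_norm_bounded ((hsum u).mul_left ‖x‖) fun n => ?_
    rw [norm_mul, Real.norm_eq_abs, Real.norm_eq_abs, abs_of_nonneg (hw _)]
    exact mul_le_mul_of_nonneg_right
      (by simpa using x.norm_coe_le_norm n) (hw _)
  have htsle : ∀ (x : ℕ →ᵇ ℝ) (u : ℕ), (∑' n : ℕ, x n * w (n, u)) ≤ ‖x‖ * C := by
    intro x u
    calc (∑' n : ℕ, x n * w (n, u)) ≤ ∑' n : ℕ, ‖x‖ * w (n, u) := by
          refine Summable.tsum_le_tsum (fun n => mul_le_mul_of_nonneg_right ?_ (hw _))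
            (hsx x u) ((hsum u).mul_left _)
          exact le_trans (le_abs_self _) (by simpa using x.norm_coe_le_norm n)
      _ = ‖x‖ * ∑' k : ℕ, w (k, u) := tsum_mul_left
      _ ≤ ‖x‖ * C := mul_le_mul_of_nonneg_left (hCle u) (norm_nonneg x)
  have hbound : ∀ (x : ℕ →ᵇ ℝ) (u : ℕ), ‖∑' n : ℕ, x n * w (n, u)‖ ≤ ‖x‖ * C := by
    intro x u
    rw [Real.norm_eq_abs, abs_le]
    refine ⟨?_, htsle x u⟩
    have := htsle (-x) u
    simp only [BoundedContinuousFunction.coe_neg, Pi.neg_apply, neg_mul, norm_neg] at this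
    rw [tsum_neg] at this
    linarith
  let Tb : (ℕ →ᵇ ℝ) → (ℕ →ᵇ ℝ) := fun x =>
    BoundedContinuousFunction.ofNormedAddCommGroup (fun u => ∑' n : ℕ, x n * w (n, u))
      continuous_of_discreteTopology (‖x‖ * C) (hbound x)
  have Tb_apply : ∀ (x : ℕ →ᵇ ℝ) (u : ℕ), Tb x u = ∑' n : ℕ, x n * w (n, u) := fun x u => rfl
  let Tl : (ℕ →ᵇ ℝ) →ₗ[ℝ] (ℕ →ᵇ ℝ) :=
    { toFun := Tb
      map_add' := fun x y => by
        ext u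
        simp only [Tb_apply, BoundedContinuousFunction.coe_add, Pi.add_apply, add_mul]
        exact (hsx x u).tsum_add (hsx y u)
      map_smul' := fun c x => by
        ext u
        simp only [Tb_apply, BoundedContinuousFunction.coe_smul, Pi.smul_apply,
          smul_eq_mul, RingHom.id_apply, mul_assoc]
        exact tsum_mul_left }
  have hTlnorm : ∀ x : ℕ →ᵇ ℝ, ‖Tl x‖ ≤ C * ‖x‖ := by
    intro x
    rw [mul_comm]
    exact BoundedContinuousFunction.norm_ofNormedAddCommGroup_le _
      (mul_nonneg (norm_nonneg x) hC0) (hbound x)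
  have hpos : ∀ x : ℕ →ᵇ ℝ, 0 ≤ x → 0 ≤ Tb x := by
    intro x hx u
    have h0 : ∀ n, (0:ℝ) ≤ x n := fun n => hx n
    show (0 : ℕ →ᵇ ℝ) u ≤ Tb x u
    simp only [BoundedContinuousFunction.coe_zero, Pi.zero_apply, Tb_apply]
    exact tsum_nonneg fun n => mul_nonneg (h0 n) (hw _)
  refine ⟨Tl.mkContinuous C hTlnorm, fun x u => rfl, hpos, ?_, ?_, ?_, ?_⟩
  · -- order continuity
    intro ι p hne hdir x hmono hglb
    letI := p
    haveI : IsDirected ι (· ≤ ·) := ⟨hdir⟩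
    haveI : Nonempty ι := hne
    classical
    have hx0 : ∀ i, 0 ≤ x i := fun i => hglb.1 ⟨i, rfl⟩
    constructor
    · rintro _ ⟨i, rfl⟩
      exact hpos (x i) (hx0 i)
    · intro b hb
      have key : ∀ (m : ℕ) (δ : ℝ), 0 < δ → ∃ i, x i m < δ := by
        intro m δ hδ
        by_contra hcon
        push_neg at hcon
        set g : ℕ →ᵇ ℝ := BoundedContinuousFunction.ofNormedAddCommGroup
          (fun n => if n = m then δ else 0) continuous_of_discreteTopology δ
          (fun n => by
            by_cases h : n = m <;> simp [h, abs_of_nonneg hδ.le, hδ.le]) with hg_def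
        have hg : g ≤ 0 := by
          refine hglb.2 ?_
          rintro _ ⟨i, rfl⟩
          intro n
          show g n ≤ x i n
          by_cases h : n = m
          · subst h
            calc g n = δ := if_pos rfl
              _ ≤ x i n := hcon i
          · calc g n = 0 := if_neg h
              _ ≤ x i n := hx0 i n
        have h1 : g m ≤ (0 : ℕ →ᵇ ℝ) m := hg m
        have h2 : g m = δ := if_pos rfl
        simp only [BoundedContinuousFunction.coe_zero, Pi.zero_apply] at h1
        rw [h2] at h1
        linarith
      intro u
      show b u ≤ (0 : ℕ →ᵇ ℝ) u
      simp only [BoundedContinuousFunction.coe_zero, Pi.zero_apply]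
      refine le_of_forall_pos_le_add fun ε hε => ?_
      rw [zero_add]
      obtain ⟨i₀⟩ := id hne
      set M : ℝ := ‖x i₀‖ with hM
      have hM0 : 0 ≤ M := norm_nonneg _
      set ε' : ℝ := ε / (2 * (M + 1)) with hε'
      have hε'0 : 0 < ε' := by positivity
      obtain ⟨N, hN⟩ : ∃ N : ℕ, (∑' m : ℕ, w (m + N, u)) < ε' := by
        have h1 : Tendsto (fun N : ℕ => ∑' m : ℕ, w (m + N, u)) atTop (nhds 0) := by
          have heq : (fun N : ℕ => ∑' m : ℕ, w (m + N, u)) =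
              fun N : ℕ => (∑' k : ℕ, w (k, u)) - ∑ k ∈ Finset.range N, w (k, u) := by
            funext N
            rw [← (hsum u).sum_add_tsum_nat_add N]
            ring
          rw [heq]
          have h2 := ((hsum u).hasSum.tendsto_sum_nat).const_sub (∑' k : ℕ, w (k, u))
          simpa using h2
        exact (h1.eventually_lt_const hε'0).exists
      set δ : ℝ := ε / (2 * (C + 1)) with hδdef
      have hδ0 : 0 < δ := by positivity
      set pick : ℕ → ι := fun n => (key n δ hδ0).choose with hpick
      have hpick_lt : ∀ n, x (pick n) n < δ := fun n => (key n δ hδ0).choose_spec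
      obtain ⟨J, hJ⟩ := Finset.exists_le (insert i₀ ((Finset.range N).image pick))
      have hJi₀ : i₀ ≤ J := hJ i₀ (Finset.mem_insert_self _ _)
      have hbu : b u ≤ Tb (x J) u := by
        have := hb ⟨J, rfl⟩
        exact this u
      have hsplit : Tb (x J) u = (∑ n ∈ Finset.range N, x J n * w (n, u)) +
          ∑' m : ℕ, x J (m + N) * w (m + N, u) := by
        rw [Tb_apply]
        exact ((hsx (x J) u).sum_add_tsum_nat_add N).symm
      have hfirst : (∑ n ∈ Finset.range N, x J n * w (n, u)) ≤ δ * C := by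
        calc (∑ n ∈ Finset.range N, x J n * w (n, u))
            ≤ ∑ n ∈ Finset.range N, δ * w (n, u) := by
              refine Finset.sum_le_sum fun n hn => ?_
              refine mul_le_mul_of_nonneg_right ?_ (hw _)
              have h1 : J ≥ pick n := hJ (pick n)
                (Finset.mem_insert_of_mem (Finset.mem_image_of_mem pick hn))
              have h2 : x J n ≤ x (pick n) n := hmono _ _ h1 n
              exact h2.trans (hpick_lt n).le
          _ = δ * ∑ n ∈ Finset.range N, w (n, u) := by rw [Finset.mul_sum]
          _ ≤ δ * C := by
              refine mul_le_mul_of_nonneg_left (le_trans ?_ (hCle u)) hδ0.le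
              exact Summable.sum_le_tsum _ (fun k _ => hw _) (hsum u)
      have hsecond : (∑' m : ℕ, x J (m + N) * w (m + N, u)) ≤ M * ε' := by
        have hsum' : Summable fun m : ℕ => x J (m + N) * w (m + N, u) :=
          (summable_nat_add_iff N).2 (hsx (x J) u)
        have hsumw' : Summable fun m : ℕ => w (m + N, u) :=
          (summable_nat_add_iff N).2 (hsum u)
        calc (∑' m : ℕ, x J (m + N) * w (m + N, u))
            ≤ ∑' m : ℕ, M * w (m + N, u) := by
              refine Summable.tsum_le_tsum (fun m => ?_) hsum' (hsumw'.mul_left M)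
              refine mul_le_mul_of_nonneg_right ?_ (hw _)
              have h1 : x J (m + N) ≤ x i₀ (m + N) := hmono _ _ hJi₀ (m + N)
              refine h1.trans (le_trans (le_abs_self _) ?_)
              simpa using (x i₀).norm_coe_le_norm (m + N)
          _ = M * ∑' m : ℕ, w (m + N, u) := tsum_mul_left
          _ ≤ M * ε' := mul_le_mul_of_nonneg_left hN.le hM0
      have hδC : δ * C ≤ ε / 2 := by
        rw [hδdef]
        rw [div_mul_eq_mul_div, div_le_div_iff₀ (by positivity) (by norm_num)]
        nlinarith
      have hMε' : M * ε' ≤ ε / 2 := by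
        rw [hε']
        rw [mul_div_assoc']
        rw [div_le_div_iff₀ (by positivity) (by norm_num)]
        nlinarith
      calc b u ≤ Tb (x J) u := hbu
        _ = _ := hsplit
        _ ≤ δ * C + M * ε' := add_le_add hfirst hsecond
        _ ≤ ε / 2 + ε / 2 := add_le_add hδC hMε'
        _ = ε := by ring
  · -- maps c₀ into c₀
    intro x hx
    rw [NormedAddCommGroup.tendsto_nhds_zero] at hx ⊢
    intro ε hε
    set ε' : ℝ := ε / (2 * (C + 1)) with hε'
    have hε'0 : 0 < ε' := by positivity
    obtain ⟨N, hNs⟩ := eventually_atTop.1 (hx ε' hε'0)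
    have hS : Tendsto (fun u : ℕ => ∑ n ∈ Finset.range N, w (n, u)) atTop (nhds 0) := by
      have h1 := tendsto_finset_sum (f := fun (n : ℕ) (u : ℕ) => w (n, u))
        (Finset.range N) (fun n _ => ha n)
      simpa using h1
    have hS2 : Tendsto (fun u : ℕ => ‖x‖ * ∑ n ∈ Finset.range N, w (n, u)) atTop (nhds 0) := by
      simpa using hS.const_mul ‖x‖
    filter_upwards [hS2.eventually_lt_const (half_pos hε)] with u hu
    have hsplit : Tb x u = (∑ n ∈ Finset.range N, x n * w (n, u)) +
        ∑' m : ℕ, x (m + N) * w (m + N, u) := by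
      rw [Tb_apply]
      exact ((hsx x u).sum_add_tsum_nat_add N).symm
    have hfirst : |∑ n ∈ Finset.range N, x n * w (n, u)| ≤
        ‖x‖ * ∑ n ∈ Finset.range N, w (n, u) := by
      calc |∑ n ∈ Finset.range N, x n * w (n, u)|
          ≤ ∑ n ∈ Finset.range N, |x n * w (n, u)| := Finset.abs_sum_le_sum_abs _ _
        _ ≤ ∑ n ∈ Finset.range N, ‖x‖ * w (n, u) := by
            refine Finset.sum_le_sum fun n _ => ?_
            rw [abs_mul, abs_of_nonneg (hw _)]
            refine mul_le_mul_of_nonneg_right ?_ (hw _)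
            simpa using x.norm_coe_le_norm n
        _ = ‖x‖ * ∑ n ∈ Finset.range N, w (n, u) := by rw [Finset.mul_sum]
    have htail : (∑' m : ℕ, w (m + N, u)) ≤ C := by
      have h1 := (hsum u).sum_add_tsum_nat_add (f := fun k => w (k, u)) N
      have h2 : 0 ≤ ∑ k ∈ Finset.range N, w (k, u) :=
        Finset.sum_nonneg fun k _ => hw _
      have := hCle u
      linarith
    have hsecond : |∑' m : ℕ, x (m + N) * w (m + N, u)| ≤ ε' * C := by
      have hsum' : Summable fun m : ℕ => x (m + N) * w (m + N, u) :=
        (summable_nat_add_iff N).2 (hsx x u)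
      have hsumw' : Summable fun m : ℕ => w (m + N, u) :=
        (summable_nat_add_iff N).2 (hsum u)
      calc |∑' m : ℕ, x (m + N) * w (m + N, u)|
          ≤ ∑' m : ℕ, |x (m + N)| * |w (m + N, u)| := by
            simpa [Real.norm_eq_abs, abs_mul] using
              norm_tsum_le_tsum_norm (f := fun m => x (m + N) * w (m + N, u))
              (hsum'.abs.congr fun m => (Real.norm_eq_abs _).symm)
        _ ≤ ∑' m : ℕ, ε' * w (m + N, u) := by
            refine Summable.tsum_le_tsum (fun m => ?_) (hsum'.abs.congr fun m => abs_mul _ _)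
              (hsumw'.mul_left ε')
            rw [abs_of_nonneg (hw _)]
            refine mul_le_mul_of_nonneg_right ?_ (hw _)
            simpa using (hNs (m + N) (Nat.le_add_left N m)).le
        _ = ε' * ∑' m : ℕ, w (m + N, u) := tsum_mul_left
        _ ≤ ε' * C := mul_le_mul_of_nonneg_left htail hε'0.le
    have hε'C : ε' * C ≤ ε / 2 := by
      rw [hε', div_mul_eq_mul_div, div_le_div_iff₀ (by positivity) (by norm_num)]
      nlinarith
    calc ‖Tb x u‖ = |Tb x u| := Real.norm_eq_abs _
      _ ≤ |∑ n ∈ Finset.range N, x n * w (n, u)| +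
          |∑' m : ℕ, x (m + N) * w (m + N, u)| := by
            rw [hsplit]; exact abs_add_le _ _
      _ ≤ ‖x‖ * (∑ n ∈ Finset.range N, w (n, u)) + ε / 2 :=
            add_le_add hfirst (hsecond.trans hε'C)
      _ < ε / 2 + ε / 2 := by linarith
      _ = ε := by ring
  · -- ‖T‖ = C
    refine le_antisymm (Tl.mkContinuous_norm_le hC0 hTlnorm) ?_
    refine hC.le.trans (ciSup_le fun u => ?_)
    have h1 : Tb (BoundedContinuousFunction.const ℕ (1 : ℝ)) u = ∑' k : ℕ, w (k, u) := by
      rw [Tb_apply]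
      simp
    calc (∑' k : ℕ, w (k, u)) = Tb (BoundedContinuousFunction.const ℕ (1 : ℝ)) u := h1.symm
      _ ≤ |Tb (BoundedContinuousFunction.const ℕ (1 : ℝ)) u| := le_abs_self _
      _ ≤ ‖Tb (BoundedContinuousFunction.const ℕ (1 : ℝ))‖ := by
          simpa using (Tb (BoundedContinuousFunction.const ℕ (1 : ℝ))).norm_coe_le_norm u
      _ ≤ ‖Tl.mkContinuous C hTlnorm‖ * ‖BoundedContinuousFunction.const ℕ (1 : ℝ)‖ :=
          (Tl.mkContinuous C hTlnorm).le_opNorm _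
      _ = ‖Tl.mkContinuous C hTlnorm‖ := by
          rw [BoundedContinuousFunction.norm_const_eq]
          simp
  · -- restriction to c₀
    intro T₀ hT₀
    refine le_antisymm (T₀.opNorm_le_bound hC0 fun x => ?_) ?_
    · rw [← ZeroAtInftyContinuousMap.norm_toBCF_eq_norm, hT₀ x,
        ← ZeroAtInftyContinuousMap.norm_toBCF_eq_norm (f := x)]
      exact hTlnorm x.toBCF
    · refine hC.le.trans (ciSup_le fun u => ?_)
      refine (hsum u).tsum_le_of_sum_range_le fun N => ?_
      set e : C₀(ℕ, ℝ) :=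
        ⟨⟨fun n => if n < N then (1 : ℝ) else 0, continuous_of_discreteTopology⟩, by
          rw [cocompact_eq_atTop (α := ℕ)]
          refine Tendsto.congr' ?_ (tendsto_const_nhds (x := (0 : ℝ)))
          filter_upwards [eventually_ge_atTop N] with n hn
          simp [Nat.not_lt.2 hn]⟩ with he
      have hval : Tb e.toBCF u = ∑ k ∈ Finset.range N, w (k, u) := by
        have h0 : ∀ n ∉ Finset.range N, e.toBCF n * w (n, u) = 0 := by
          intro n hn
          have h2 : ¬ n < N := by simpa using hn
          show (if n < N then (1 : ℝ) else 0) * w (n, u) = 0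
          simp [h2]
        rw [Tb_apply, tsum_eq_sum h0]
        refine Finset.sum_congr rfl fun n hn => ?_
        have hlt : n < N := Finset.mem_range.1 hn
        show (if n < N then (1 : ℝ) else 0) * w (n, u) = w (n, u)
        simp [hlt]
      have hnorm_e : ‖e‖ ≤ 1 := by
        rw [← ZeroAtInftyContinuousMap.norm_toBCF_eq_norm]
        refine (BoundedContinuousFunction.norm_le one_pos.le).2 fun n => ?_
        show ‖(if n < N then (1 : ℝ) else 0)‖ ≤ 1
        split <;> simp
      calc ∑ k ∈ Finset.range N, w (k, u) = Tb e.toBCF u := hval.symm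
        _ ≤ |Tb e.toBCF u| := le_abs_self _
        _ ≤ ‖Tb e.toBCF‖ := by simpa using (Tb e.toBCF).norm_coe_le_norm u
        _ = ‖(T₀ e).toBCF‖ := (congrArg norm (hT₀ e)).symm
        _ = ‖T₀ e‖ := ZeroAtInftyContinuousMap.norm_toBCF_eq_norm
        _ ≤ ‖T₀‖ * ‖e‖ := T₀.le_opNorm e
        _ ≤ ‖T₀‖ * 1 := mul_le_mul_of_nonneg_left hnorm_e (norm_nonneg T₀)
        _ = ‖T₀‖ := mul_one _
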